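/- Let W ≥ 2 and 1 ≤ α ≤ W−2. All complex roots of the polynomial p(z) = 1/4 + (1/4)·z^(W−1−α) + z^(W−1) lie strictly inside the unit circle. -/

import Mathlib

/-- all complex roots of `p(z) = 1/4 + (1/4)z^(W−1−α) + z^(W−1)`
lie strictly inside the unit circle. -/
theorem stmt_3 (W α : ℕ) (hW : 2 ≤ W) (hα1 : 1 ≤ α) (hα2 : α ≤ W - 2) :
    ∀ z : ℂ, (1/4 : ℂ) + (1/4 : ℂ) * z ^ (W - 1 - α) + z ^ (W - 1) = 0 →
      ‖z‖ < 1 := by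
  intro z hz
  by_contra hr
  push_neg at hr
  set k := W - 1 - α with hkdef
  set n := W - 1 with hndef
  have hkn : k ≤ n := by omega
  have heq : z ^ n = -(1/4 : ℂ) - (1/4 : ℂ) * z ^ k := by
    linear_combination hz
  have habs : ‖z ^ n‖ ≤ 1/4 + 1/4 * ‖z ^ k‖ := by
    rw [heq]
    calc ‖-(1/4 : ℂ) - (1/4 : ℂ) * z ^ k‖
        ≤ ‖-(1/4 : ℂ)‖ + ‖(1/4 : ℂ) * z ^ k‖ :=
          (norm_sub_le _ _)
      _ = 1/4 + 1/4 * ‖z ^ k‖ := by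
          simp [map_mul]
  rw [norm_pow, norm_pow] at habs
  have h1 : (1:ℝ) ≤ ‖z‖ ^ k := one_le_pow₀ hr
  have h2 : ‖z‖ ^ k ≤ ‖z‖ ^ n :=
    pow_le_pow_right₀ hr hkn
  linarith
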